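/- There is no unilateral weighted shift W_λ in ℓ²(ℕ) with all weights nonzero that is C-symmetric with respect to a conjugation C satisfying C eₙ ∈ dom(W_λ) for all n ∈ ℕ. -/

import Mathlib

open InnerProductSpace in
/-- A conjugation on a complex inner product space: an antilinear involution
satisfying `⟪Cf, Cg⟫ = ⟪g, f⟫`. -/
structure Conjugation (H : Type*) [NormedAddCommGroup H] [InnerProductSpace ℂ H] where
  toFun : H → H
  map_add' : ∀ x y, toFun (x + y) = toFun x + toFun y
  map_smul' : ∀ (c : ℂ) (x : H), toFun (c • x) = (starRingEnd ℂ c) • toFun x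
  invol : ∀ x, toFun (toFun x) = x
  inner_map : ∀ x y, (inner ℂ (toFun x) (toFun y) : ℂ) = inner ℂ y x

/-- `T` is `C`-symmetric: `T ⊆ C T* C`. -/
noncomputable def CSymmetric {H : Type*} [NormedAddCommGroup H] [InnerProductSpace ℂ H]
    [CompleteSpace H] (C : Conjugation H) (T : H →ₗ.[ℂ] H) : Prop :=
  ∀ x : T.domain, ∃ hx : C.toFun x ∈ T.adjoint.domain,
    C.toFun (T.adjoint ⟨C.toFun x, hx⟩) = T x

/-- `T` is `C`-selfadjoint: `T = C T* C`. -/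
noncomputable def CSelfAdjoint {H : Type*} [NormedAddCommGroup H] [InnerProductSpace ℂ H]
    [CompleteSpace H] (C : Conjugation H) (T : H →ₗ.[ℂ] H) : Prop :=
  CSymmetric C T ∧ ∀ y : H, C.toFun y ∈ T.adjoint.domain → y ∈ T.domain

/-- Composition of partially defined linear maps, with its natural (maximal) domain. -/
noncomputable def LinearPMap.pcomp {R E F G : Type*} [Ring R] [AddCommGroup E] [Module R E]
    [AddCommGroup F] [Module R F] [AddCommGroup G] [Module R G]
    (g : F →ₗ.[R] G) (f : E →ₗ.[R] F) : E →ₗ.[R] G :=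
  g.comp (f.domRestrict ((g.domain.comap f.toFun).map f.domain.subtype))
    (by
      rintro ⟨x, hx⟩
      obtain ⟨⟨y, hy, hyx⟩, hx2⟩ := id hx
      have h := LinearPMap.domRestrict_apply (f := f) (x := ⟨x, hx⟩) (y := y) (by exact hyx.symm)
      exact h ▸ hy)

/-- Natural powers of a partially defined linear map, `T^(n+1) = T ∘ T^n`, with
`T^0` the identity on the whole space. -/
noncomputable def LinearPMap.ppow {R E : Type*} [Ring R] [AddCommGroup E] [Module R E]
    (T : E →ₗ.[R] E) : ℕ → E →ₗ.[R] E
  | 0 => ⟨⊤, (⊤ : Submodule R E).subtype⟩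
  | n + 1 => T.pcomp (T.ppow n)

/-- `W` is the unilateral weighted shift in `ℓ²(ℕ)` with weights `lam` (0-indexed:
`W eₙ = lam n • e_{n+1}`): it has the maximal domain
`{f : Σ |lam n * f n|² < ∞}` and acts by `(W f)(n+1) = lam n * f n`, `(W f)(0) = 0`. -/
def IsWeightedShift (lam : ℕ → ℂ) (W : lp (fun _ : ℕ => ℂ) 2 →ₗ.[ℂ] lp (fun _ : ℕ => ℂ) 2) :
    Prop :=
  (∀ f : lp (fun _ : ℕ => ℂ) 2, f ∈ W.domain ↔ Memℓp (fun n => lam n * f n) 2) ∧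
  (∀ f : W.domain, (W f : lp (fun _ : ℕ => ℂ) 2) 0 = 0 ∧
    ∀ n : ℕ, (W f : lp (fun _ : ℕ => ℂ) 2) (n + 1) = lam n * (f : lp (fun _ : ℕ => ℂ) 2) n)

/-- The canonical orthonormal basis of `ℓ²(ℕ)` (0-indexed). -/
noncomputable def e (n : ℕ) : lp (fun _ : ℕ => ℂ) 2 := lp.single 2 n 1

/-- there is no unilateral weighted shift with all weights nonzero which
is `C`-symmetric with respect to a conjugation `C` with `C eₙ ∈ dom W_λ` for all `n`. -/
theorem stmt_14 (lam : ℕ → ℂ) (hlam : ∀ n, lam n ≠ 0)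
    (W : lp (fun _ : ℕ => ℂ) 2 →ₗ.[ℂ] lp (fun _ : ℕ => ℂ) 2)
    (hW : IsWeightedShift lam W)
    (C : Conjugation (lp (fun _ : ℕ => ℂ) 2))
    (hdom : ∀ n : ℕ, C.toFun (e n) ∈ W.domain) :
    ¬ CSymmetric C W := by
  classical
  intro hsym
  -- each `e n` is in the domain of `W`
  have heapp : ∀ n k : ℕ, (e n : ∀ _ : ℕ, ℂ) k = if k = n then 1 else 0 := by
    intro n k
    simp only [e]
    rw [lp.single_apply]
    split_ifs with h
    · subst h; simp [Pi.single_apply]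
    · simp [Pi.single_apply, h]
  have hmem : ∀ n : ℕ, e n ∈ W.domain := by
    intro n
    rw [hW.1]
    have hfun : (fun k => lam k * (e n : ∀ _ : ℕ, ℂ) k)
        = ⇑(lp.single 2 n (lam n) : lp (fun _ : ℕ => ℂ) 2) := by
      funext k
      rw [heapp, lp.single_apply]
      split_ifs with h
      · subst h; simp
      · simp [Pi.single_apply, h]
    rw [hfun]
    exact lp.memℓp _
  -- density of the domain
  have hd : Dense (W.domain : Set (lp (fun _ : ℕ => ℂ) 2)) := by
    rw [Submodule.dense_iff_topologicalClosure_eq_top,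
      Submodule.topologicalClosure_eq_top_iff, Submodule.eq_bot_iff]
    intro x hx
    refine lp.ext (funext fun n => ?_)
    have h0 := (Submodule.mem_orthogonal _ _).mp hx (e n) (hmem n)
    rw [show e n = lp.single 2 n (1 : ℂ) from rfl, lp.inner_single_left] at h0
    simpa using h0
  have hfa := W.adjoint_isFormalAdjoint hd
  -- apply C-symmetry at C e₀
  obtain ⟨hx, heq⟩ := hsym ⟨C.toFun (e 0), hdom 0⟩
  set u : W.adjoint.domain := ⟨C.toFun (C.toFun (e 0)), hx⟩ with hu
  set w : lp (fun _ : ℕ => ℂ) 2 := W ⟨C.toFun (e 0), hdom 0⟩ with hwdef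
  have heq' : C.toFun (W.adjoint u) = w := heq
  -- ⟪W† u, C e n⟫ = 0 for all n
  have h1 : ∀ n : ℕ, (inner ℂ (W.adjoint u) (C.toFun (e n)) : ℂ) = 0 := by
    intro n
    have := hfa u ⟨C.toFun (e n), hdom n⟩
    rw [this]
    have hcoe : (u : lp (fun _ : ℕ => ℂ) 2) = e 0 := C.invol (e 0)
    rw [hcoe, show e 0 = lp.single 2 0 (1 : ℂ) from rfl, lp.inner_single_left]
    have h00 := (hW.2 ⟨C.toFun (e n), hdom n⟩).1
    simp [h00]
  -- hence ⟪w, e n⟫ = 0 for all n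
  have h2 : ∀ n : ℕ, (inner ℂ w (e n) : ℂ) = 0 := by
    intro n
    rw [← heq', ← C.invol (e n), C.inner_map, ← inner_conj_symm, h1, map_zero]
  -- hence w = 0
  have hw0 : w = 0 := by
    refine lp.ext (funext fun n => ?_)
    have := h2 n
    rw [show e n = lp.single 2 n (1 : ℂ) from rfl, lp.inner_single_right] at this
    simp only [RCLike.inner_apply, map_one, mul_one] at this
    have : (starRingEnd ℂ) (w n) = 0 := by simpa using this
    simpa using congrArg (starRingEnd ℂ) this
  -- hence C e₀ = 0
  have hC0 : C.toFun (e 0) = 0 := by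
    refine lp.ext (funext fun n => ?_)
    have h3 := (hW.2 ⟨C.toFun (e 0), hdom 0⟩).2 n
    rw [← hwdef, hw0] at h3
    have : lam n * (C.toFun (e 0) : ∀ _ : ℕ, ℂ) n = 0 := by
      simpa using h3.symm
    have := (mul_eq_zero.mp this).resolve_left (hlam n)
    simpa using this
  -- hence e₀ = 0, contradiction
  have hCzero : C.toFun (0 : lp (fun _ : ℕ => ℂ) 2) = 0 := by
    have := C.map_smul' 0 0
    simpa using this
  have he0 : e 0 = 0 := by
    rw [← C.invol (e 0), hC0, hCzero]
  have : (e 0 : ∀ _ : ℕ, ℂ) 0 = 1 := by rw [heapp]; simp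
  rw [he0] at this
  simp at this
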